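/- Let $\mu$ be a locally finite Borel measure on $\mathbb{R}$ and let $\lambda > 0$. Then the dyadic maximal operator satisfies the weighted weak-type $(1,1)$ inequality: for every nonnegative weight $w$ and every $f \in L^1(\mu)$, $\int_{\{M^{\mathcal{D}}_{\mu} f > \lambda\}} w \, d\mu \leq \frac{1}{\lambda} \int_{\mathbb{R}} |f| \, (M^{\mathcal{D}}_{\mu} w) \, d\mu$. -/

import Mathlib

open MeasureTheory Set ENNReal
open scoped NNReal

/-- The standard dyadic interval `[j 2^{-k}, (j+1) 2^{-k})`. -/
noncomputable def dyadicI (k j : ℤ) : Set ℝ :=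
  Set.Ico ((j : ℝ) * (2 : ℝ) ^ (-k)) (((j : ℝ) + 1) * (2 : ℝ) ^ (-k))

/-- The dyadic maximal operator relative to the measure `μ` (with the convention
`0/0 = 0` built into `ENNReal` division). -/
noncomputable def dyadicMax (μ : Measure ℝ) (f : ℝ → ℝ≥0∞) (x : ℝ) : ℝ≥0∞ :=
  ⨆ (k : ℤ) (j : ℤ) (_ : x ∈ dyadicI k j),
    (∫⁻ y in dyadicI k j, f y ∂μ) / μ (dyadicI k j)

lemma floor_div_int' {a : ℝ} {n : ℤ} (hn : 0 < n) : ⌊a / (n : ℝ)⌋ = ⌊a⌋ / n := by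
  set j := ⌊a⌋ with hj
  have h1 : (j : ℝ) ≤ a := Int.floor_le a
  have h2 : a < j + 1 := Int.lt_floor_add_one a
  have hq : n * (j / n) ≤ j ∧ j + 1 ≤ n * (j / n) + n := by
    have e1 := Int.mul_ediv_add_emod j n
    have e2 := Int.emod_nonneg j hn.ne'
    have e3 := Int.emod_lt_of_pos j hn
    constructor <;> linarith
  have hnR : (0 : ℝ) < (n : ℝ) := by exact_mod_cast hn
  rw [Int.floor_eq_iff]
  constructor
  · rw [le_div_iff₀ hnR]
    calc ((j / n : ℤ) : ℝ) * n = ((n * (j / n) : ℤ) : ℝ) := by push_cast; ring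
    _ ≤ (j : ℝ) := by exact_mod_cast hq.1
    _ ≤ a := h1
  · rw [div_lt_iff₀ hnR]
    calc a < (j : ℝ) + 1 := h2
    _ ≤ ((n * (j / n) + n : ℤ) : ℝ) := by exact_mod_cast hq.2
    _ = (((j / n : ℤ) : ℝ) + 1) * n := by push_cast; ring

lemma mem_dyadicI_iff {k j : ℤ} {x : ℝ} : x ∈ dyadicI k j ↔ ⌊x * 2 ^ k⌋ = j := by
  have h2 : (0:ℝ) < (2:ℝ) ^ k := zpow_pos (by norm_num) k
  simp only [dyadicI, Set.mem_Ico, zpow_neg, ← div_eq_mul_inv, Int.floor_eq_iff,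
    div_le_iff₀ h2, lt_div_iff₀ h2]

lemma floor_scale_eq {k k' j' : ℤ} (hkk : k ≤ k') {t : ℝ} (ht : t ∈ dyadicI k' j') :
    ⌊t * 2 ^ k⌋ = j' / 2 ^ (k' - k).toNat := by
  have h := mem_dyadicI_iff.mp ht
  have hnpos : (0 : ℤ) < 2 ^ (k' - k).toNat := pow_pos (by norm_num) _
  have key : t * 2 ^ k = (t * 2 ^ k') / (((2 : ℤ) ^ (k' - k).toNat : ℤ) : ℝ) := by
    have hne : (((2 : ℤ) ^ (k' - k).toNat : ℤ) : ℝ) ≠ 0 := by positivity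
    rw [eq_div_iff hne]
    push_cast
    rw [mul_assoc, ← zpow_natCast (2:ℝ) ((k' - k).toNat), ← zpow_add₀ (two_ne_zero),
      Int.toNat_of_nonneg (sub_nonneg.2 hkk)]
    ring_nf
  rw [key, floor_div_int' hnpos, h]

lemma measurableSet_dyadicI (k j : ℤ) : MeasurableSet (dyadicI k j) :=
  measurableSet_Ico

lemma dyadicI_measure_lt_top (μ : Measure ℝ) [IsLocallyFiniteMeasure μ] (k j : ℤ) :
    μ (dyadicI k j) < ⊤ :=
  lt_of_le_of_lt (measure_mono Set.Ico_subset_Icc_self) isCompact_Icc.measure_lt_top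

lemma le_dyadicMax (μ : Measure ℝ) (f : ℝ → ℝ≥0∞) {k j : ℤ} {x : ℝ} (hx : x ∈ dyadicI k j) :
    (∫⁻ y in dyadicI k j, f y ∂μ) / μ (dyadicI k j) ≤ dyadicMax μ f x :=
  le_iSup_of_le k (le_iSup_of_le j (le_iSup_of_le hx le_rfl))

/-- Weighted weak type (1,1) inequality for the dyadic maximal operator:
`∫_{M f > λ} w dμ ≤ (1/λ) ∫ |f| (M w) dμ`. -/
theorem stmt1 (μ : Measure ℝ) [IsLocallyFiniteMeasure μ] (lam : ℝ≥0) (hlam : 0 < lam)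
    (w : ℝ → ℝ≥0∞) (hw : Measurable w) (f : ℝ → ℝ) (hf : Integrable f μ) :
    (∫⁻ x in {x | (lam : ℝ≥0∞) < dyadicMax μ (fun y => (‖f y‖₊ : ℝ≥0∞)) x}, w x ∂μ)
      ≤ (1 / (lam : ℝ≥0∞)) * ∫⁻ x, (‖f x‖₊ : ℝ≥0∞) * dyadicMax μ w x ∂μ := by
  classical
  rw [one_div]
  have hlam0 : (lam : ℝ≥0∞) ≠ 0 := by
    simpa using hlam.ne'
  have hlamtop : (lam : ℝ≥0∞) ≠ ⊤ := coe_ne_top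
  set g : ℝ → ℝ≥0∞ := fun y => (‖f y‖₊ : ℝ≥0∞) with hgdef
  have hgm : AEMeasurable g μ := hf.aestronglyMeasurable.enorm
  set Mw : ℝ → ℝ≥0∞ := dyadicMax μ w with hMwdef
  set P : ℤ → ℤ → Prop :=
    fun k j => (lam : ℝ≥0∞) < (∫⁻ y in dyadicI k j, g y ∂μ) / μ (dyadicI k j) with hPdef
  set E : Set ℝ := {x | (lam : ℝ≥0∞) < dyadicMax μ g x} with hEdef
  -- membership characterization
  have hmem : ∀ x : ℝ, x ∈ E ↔ ∃ k j, P k j ∧ x ∈ dyadicI k j := by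
    intro x
    constructor
    · intro h
      rw [hEdef, Set.mem_setOf_eq] at h
      simp only [dyadicMax, lt_iSup_iff] at h
      obtain ⟨k, j, hxm, hkj⟩ := h
      exact ⟨k, j, hkj, hxm⟩
    · rintro ⟨k, j, hkj, hxm⟩
      exact lt_of_lt_of_le hkj (le_dyadicMax μ g hxm)
  set S : ℕ → Set ℝ :=
    fun N => ⋃ (k : ℤ) (j : ℤ) (_ : -(N : ℤ) ≤ k ∧ P k j), dyadicI k j with hSdef
  have hSmeas : ∀ N, MeasurableSet (S N) := fun N =>
    MeasurableSet.iUnion fun k => MeasurableSet.iUnion fun j =>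
      MeasurableSet.iUnion fun _ => measurableSet_dyadicI k j
  have hSE : E = ⋃ N, S N := by
    ext x
    simp only [hSdef, Set.mem_iUnion, hmem x]
    constructor
    · rintro ⟨k, j, hkj, hxm⟩
      exact ⟨k.natAbs, k, j, ⟨by omega, hkj⟩, hxm⟩
    · rintro ⟨N, k, j, ⟨_, hkj⟩, hxm⟩
      exact ⟨k, j, hkj, hxm⟩
  have hSmono : Monotone S := by
    intro N M hNM x hx
    have hNM' : (N : ℤ) ≤ (M : ℤ) := by exact_mod_cast hNM
    simp only [hSdef, Set.mem_iUnion] at hx ⊢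
    obtain ⟨k, j, ⟨hk, hkj⟩, hxm⟩ := hx
    exact ⟨k, j, ⟨by omega, hkj⟩, hxm⟩
  have hEmeas : MeasurableSet E := by
    rw [hSE]; exact MeasurableSet.iUnion hSmeas
  -- key bound for each N
  have key : ∀ N : ℕ, μ.withDensity w (S N)
      ≤ (lam : ℝ≥0∞)⁻¹ * ∫⁻ x, (‖f x‖₊ : ℝ≥0∞) * Mw x ∂μ := by
    intro N
    set T : Set (ℤ × ℤ) := {p | -(N : ℤ) ≤ p.1 ∧ P p.1 p.2 ∧
      ∀ k', -(N : ℤ) ≤ k' → k' < p.1 → ¬ P k' (p.2 / 2 ^ (p.1 - k').toNat)} with hTdef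
    -- covering
    have hcover : S N ⊆ ⋃ p ∈ T, dyadicI p.1 p.2 := by
      intro x hx
      simp only [hSdef, Set.mem_iUnion] at hx
      obtain ⟨k, j, ⟨hkN, hkj⟩, hxm⟩ := hx
      have hQ : ∃ n : ℕ, P ((n : ℤ) - N) ⌊x * 2 ^ ((n : ℤ) - (N : ℤ))⌋ := by
        refine ⟨(k + N).toNat, ?_⟩
        have he : (((k + N).toNat : ℕ) : ℤ) - (N : ℤ) = k := by omega
        rw [he, mem_dyadicI_iff.mp hxm]
        exact hkj
      set n₀ := Nat.find hQ with hn₀def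
      set k₀ : ℤ := (n₀ : ℤ) - (N : ℤ) with hk₀def
      set j₀ : ℤ := ⌊x * 2 ^ k₀⌋ with hj₀def
      have hx₀ : x ∈ dyadicI k₀ j₀ := mem_dyadicI_iff.mpr rfl
      have hP₀ : P k₀ j₀ := Nat.find_spec hQ
      have hmin : ∀ k', -(N : ℤ) ≤ k' → k' < k₀ → ¬ P k' ⌊x * 2 ^ k'⌋ := by
        intro k' hk'N hk'lt hPk'
        have hlt : (k' + N).toNat < n₀ := by omega
        apply Nat.find_min hQ hlt
        have he : (((k' + N).toNat : ℕ) : ℤ) - (N : ℤ) = k' := by omega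
        rw [he]
        exact hPk'
      have hmemT : (k₀, j₀) ∈ T := by
        refine ⟨by omega, hP₀, ?_⟩
        intro k' hk'N hk'lt
        have he : j₀ / 2 ^ (k₀ - k').toNat = ⌊x * 2 ^ k'⌋ := by
          rw [hj₀def]; exact (floor_scale_eq hk'lt.le hx₀).symm
        rw [he]
        exact hmin k' hk'N hk'lt
      exact Set.mem_biUnion hmemT hx₀
    -- disjointness
    have aux : ∀ p q : ℤ × ℤ, p ∈ T → q ∈ T → p.1 ≤ q.1 →
        ∀ x : ℝ, x ∈ dyadicI p.1 p.2 → x ∈ dyadicI q.1 q.2 → p = q := by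
      rintro ⟨k, j⟩ ⟨k', j'⟩ hp hq hle x hxp hxq
      rcases eq_or_lt_of_le hle with heq | hlt
      · simp only at heq
        subst heq
        have h1 := mem_dyadicI_iff.mp hxp
        have h2 := mem_dyadicI_iff.mp hxq
        exact Prod.ext rfl (by rw [← h1, h2])
      · exfalso
        simp only at hlt
        have h1 : ⌊x * 2 ^ k⌋ = j := mem_dyadicI_iff.mp hxp
        have h2 : ⌊x * 2 ^ k⌋ = j' / 2 ^ (k' - k).toNat := floor_scale_eq hlt.le hxq
        have hcontra := hq.2.2 k hp.1 hlt
        rw [← h2, h1] at hcontra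
        exact hcontra hp.2.1
    have hdisj : T.PairwiseDisjoint (fun p : ℤ × ℤ => dyadicI p.1 p.2) := by
      intro p hp q hq hpq
      rcases le_total p.1 q.1 with h | h
      · exact Set.disjoint_left.mpr fun x hxp hxq => hpq (aux p q hp hq h x hxp hxq)
      · exact Set.disjoint_right.mpr fun x hxq hxp => hpq ((aux q p hq hp h x hxq hxp).symm)
    -- key estimate on each selected cube
    have hkey : ∀ p : ℤ × ℤ, p ∈ T → μ.withDensity w (dyadicI p.1 p.2)
        ≤ (lam : ℝ≥0∞)⁻¹ * ∫⁻ x in dyadicI p.1 p.2, g x * Mw x ∂μ := by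
      rintro ⟨k, j⟩ hp
      have hPkj : (lam : ℝ≥0∞) < (∫⁻ y in dyadicI k j, g y ∂μ) / μ (dyadicI k j) := hp.2.1
      have hμfin : μ (dyadicI k j) ≠ ⊤ := (dyadicI_measure_lt_top μ k j).ne
      have hμpos : μ (dyadicI k j) ≠ 0 := by
        intro h0
        rw [Measure.restrict_eq_zero.mpr h0, lintegral_zero_measure, ENNReal.zero_div] at hPkj
        exact (not_lt_of_ge (zero_le (a := (lam : ℝ≥0∞)))) hPkj
      have hgm' : AEMeasurable g (μ.restrict (dyadicI k j)) := hgm.restrict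
      have hlamI : (lam : ℝ≥0∞) * μ (dyadicI k j) ≤ ∫⁻ y in dyadicI k j, g y ∂μ :=
        calc (lam : ℝ≥0∞) * μ (dyadicI k j)
            ≤ (∫⁻ y in dyadicI k j, g y ∂μ) / μ (dyadicI k j) * μ (dyadicI k j) :=
              mul_le_mul_left hPkj.le _
          _ = ∫⁻ y in dyadicI k j, g y ∂μ := ENNReal.div_mul_cancel hμpos hμfin
      set a := ∫⁻ y in dyadicI k j, w y ∂μ with hadef
      set b := a / μ (dyadicI k j) with hbdef
      have hdm : b * μ (dyadicI k j) = a := ENNReal.div_mul_cancel hμpos hμfin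
      have hlama : (lam : ℝ≥0∞) * a ≤ ∫⁻ x in dyadicI k j, g x * Mw x ∂μ :=
        calc (lam : ℝ≥0∞) * a = b * ((lam : ℝ≥0∞) * μ (dyadicI k j)) := by rw [← hdm]; ring
          _ ≤ b * ∫⁻ y in dyadicI k j, g y ∂μ := mul_le_mul_right hlamI _
          _ = ∫⁻ y in dyadicI k j, b * g y ∂μ := (lintegral_const_mul'' _ hgm').symm
          _ ≤ ∫⁻ x in dyadicI k j, g x * Mw x ∂μ := by
              refine setLIntegral_mono' (measurableSet_dyadicI k j) fun x hx => ?_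
              rw [mul_comm]
              exact mul_le_mul_right (le_dyadicMax μ w hx) _
      rw [withDensity_apply w (measurableSet_dyadicI k j), ← hadef]
      calc a = (lam : ℝ≥0∞)⁻¹ * ((lam : ℝ≥0∞) * a) := by
            rw [← mul_assoc, ENNReal.inv_mul_cancel hlam0 hlamtop, one_mul]
        _ ≤ (lam : ℝ≥0∞)⁻¹ * ∫⁻ x in dyadicI k j, g x * Mw x ∂μ := mul_le_mul_right hlama _
    -- assemble
    have hdisj' : Pairwise (Function.onFun Disjoint
        fun p : T => dyadicI (p : ℤ × ℤ).1 (p : ℤ × ℤ).2) :=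
      fun p q hpq => hdisj p.2 q.2 (fun h => hpq (Subtype.ext h))
    calc μ.withDensity w (S N) ≤ μ.withDensity w (⋃ p ∈ T, dyadicI p.1 p.2) :=
          measure_mono hcover
      _ ≤ ∑' p : T, μ.withDensity w (dyadicI (p : ℤ × ℤ).1 (p : ℤ × ℤ).2) :=
          measure_biUnion_le _ (Set.to_countable T) _
      _ ≤ ∑' p : T, (lam : ℝ≥0∞)⁻¹ *
            ∫⁻ x in dyadicI (p : ℤ × ℤ).1 (p : ℤ × ℤ).2, g x * Mw x ∂μ :=
          ENNReal.tsum_le_tsum fun p => hkey p p.2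
      _ = (lam : ℝ≥0∞)⁻¹ * ∑' p : T,
            ∫⁻ x in dyadicI (p : ℤ × ℤ).1 (p : ℤ × ℤ).2, g x * Mw x ∂μ :=
          ENNReal.tsum_mul_left
      _ = (lam : ℝ≥0∞)⁻¹ *
            ∫⁻ x in ⋃ p : T, dyadicI (p : ℤ × ℤ).1 (p : ℤ × ℤ).2, g x * Mw x ∂μ := by
          rw [lintegral_iUnion (fun p => measurableSet_dyadicI _ _) hdisj']
      _ ≤ (lam : ℝ≥0∞)⁻¹ * ∫⁻ x, g x * Mw x ∂μ :=
          mul_le_mul_right (setLIntegral_le_lintegral _ _) _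
      _ = (lam : ℝ≥0∞)⁻¹ * ∫⁻ x, (‖f x‖₊ : ℝ≥0∞) * Mw x ∂μ := by
          simp only [hgdef]
  -- conclude
  have hdir : Directed (· ⊆ ·) S := hSmono.directed_le
  calc ∫⁻ x in E, w x ∂μ = μ.withDensity w E := (withDensity_apply w hEmeas).symm
    _ = ⨆ N, μ.withDensity w (S N) := by rw [hSE]; exact hdir.measure_iUnion
    _ ≤ (lam : ℝ≥0∞)⁻¹ * ∫⁻ x, (‖f x‖₊ : ℝ≥0∞) * Mw x ∂μ := iSup_le key
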